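/- arXiv:2502.21222 — 8 statements merged into one kernel-verified Lean document; each statement's English description precedes it below -/
import Mathlib

section
/- Let s = −k r/(|r| H) be the projection of r onto the fall circle of radius −k/H, and let n = p × L where L = r × p. Then the orthogonal reflection t of s in the line through r with direction p (whose normal direction within the orbital plane is n) satisfies t = s − 2((s − r)·n) n/|n|² = K/(μH), where K = p × L − kμ r/|r| is the Lenz vector. -/
open RealInnerProductSpace
noncomputable def cross3 (a b : EuclideanSpace ℝ (Fin 3)) : EuclideanSpace ℝ (Fin 3) :=
  WithLp.toLp 2 ![a 1 * b 2 - a 2 * b 1, a 2 * b 0 - a 0 * b 2, a 0 * b 1 - a 1 * b 0]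

lemma inner3 (a b : EuclideanSpace ℝ (Fin 3)) :
    ⟪a, b⟫ = a 0 * b 0 + a 1 * b 1 + a 2 * b 2 := by
  simp [PiLp.inner_apply, Fin.sum_univ_three, RCLike.inner_apply, mul_comm]

lemma cross0 (a b : EuclideanSpace ℝ (Fin 3)) : cross3 a b 0 = a 1 * b 2 - a 2 * b 1 := rfl
lemma cross1 (a b : EuclideanSpace ℝ (Fin 3)) : cross3 a b 1 = a 2 * b 0 - a 0 * b 2 := rfl
lemma cross2 (a b : EuclideanSpace ℝ (Fin 3)) : cross3 a b 2 = a 0 * b 1 - a 1 * b 0 := rfl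

/-- The reflection of s = −k r/(|r|H) in the tangent line (with in-plane normal n = p × L)
equals K/(μH), with K the Lenz vector. -/
theorem reflection_is_lenz_vector
    (r p : EuclideanSpace ℝ (Fin 3)) (μ k H : ℝ)
    (hr : r ≠ 0) (hp : p ≠ 0) (hμ : 0 < μ) (hk : 0 < k)
    (L : EuclideanSpace ℝ (Fin 3)) (hL : L = cross3 r p) (hLne : L ≠ 0)
    (hH : H = ‖p‖ ^ 2 / (2 * μ) - k / ‖r‖) (hHneg : H < 0)
    (s n K : EuclideanSpace ℝ (Fin 3))
    (hs : s = (-(k / (‖r‖ * H))) • r)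
    (hn : n = cross3 p L)
    (hK : K = cross3 p L - ((k * μ) / ‖r‖) • r) :
    s - ((2 * ⟪s - r, n⟫) / ‖n‖ ^ 2) • n = (μ * H)⁻¹ • K := by
  have hRpos : (0:ℝ) < ‖r‖ := norm_pos_iff.mpr hr
  have hPpos : (0:ℝ) < ‖p‖ := norm_pos_iff.mpr hp
  have hLpos : (0:ℝ) < ‖L‖ := norm_pos_iff.mpr hLne
  have hHne : H ≠ 0 := ne_of_lt hHneg
  have hμne : μ ≠ 0 := hμ.ne'
  have hrn : ⟪r, n⟫ = ‖L‖ ^ 2 := by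
    rw [← real_inner_self_eq_norm_sq, inner3, inner3, hn, hL]
    simp only [cross0, cross1, cross2]
    ring
  have hnn : ‖n‖ ^ 2 = ‖p‖ ^ 2 * ‖L‖ ^ 2 := by
    rw [← real_inner_self_eq_norm_sq, ← real_inner_self_eq_norm_sq,
      ← real_inner_self_eq_norm_sq, inner3, inner3, inner3, hn, hL]
    simp only [cross0, cross1, cross2]
    ring
  have hinner : ⟪s - r, n⟫ = (-(k / (‖r‖ * H)) - 1) * ‖L‖ ^ 2 := by
    rw [hs, inner_sub_left, real_inner_smul_left, hrn]; ring
  have hRH : 2 * μ * (‖r‖ * H) = ‖r‖ * ‖p‖ ^ 2 - 2 * μ * k := by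
    rw [hH]; field_simp
  rw [hinner, hnn, hs, hK, ← hn]
  match_scalars
  · field_simp
  · have h2 : ‖r‖ * H * ‖p‖ ^ 2 ≠ 0 := by positivity
    field_simp
    linear_combination hRH
end

section
/- With t = K/(μH), the sum of distances |t − r| + |r| equals −k/H. Hence every point r on a Kepler orbit with energy H < 0, angular momentum L ≠ 0, and Lenz vector K lies on the ellipse with foci 0 and K/(μH) and major axis 2a = −k/H. -/
open RealInnerProductSpace
/-- With t = K/(μH), |t − r| + |r| = −k/H, so r lies on the ellipse with foci 0 and
K/(μH) and major axis 2a = −k/H. -/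
theorem orbit_point_on_ellipse
    (r p : EuclideanSpace ℝ (Fin 3)) (μ k H : ℝ)
    (hr : r ≠ 0) (hμ : 0 < μ) (hk : 0 < k)
    (L : EuclideanSpace ℝ (Fin 3)) (hL : L = cross3 r p) (hLne : L ≠ 0)
    (hH : H = ‖p‖ ^ 2 / (2 * μ) - k / ‖r‖) (hHneg : H < 0)
    (K t : EuclideanSpace ℝ (Fin 3))
    (hK : K = cross3 p L - ((k * μ) / ‖r‖) • r)
    (ht : t = (μ * H)⁻¹ • K) :
    ‖t - r‖ + ‖r‖ = -k / H := by
  set s := ‖r‖ with hs_def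
  have hs : 0 < s := norm_pos_iff.mpr hr
  set P := ‖p‖ ^ 2 with hP_def
  have hPnn : 0 ≤ P := sq_nonneg _
  have hs2 : s ^ 2 = r 0 ^ 2 + r 1 ^ 2 + r 2 ^ 2 := by
    rw [hs_def, EuclideanSpace.norm_eq, Real.sq_sqrt (by positivity)]
    simp [Fin.sum_univ_three]
  have hP2 : P = p 0 ^ 2 + p 1 ^ 2 + p 2 ^ 2 := by
    rw [hP_def, EuclideanSpace.norm_eq, Real.sq_sqrt (by positivity)]
    simp [Fin.sum_univ_three]
  have hPn : ‖p‖ ^ 2 = p 0 ^ 2 + p 1 ^ 2 + p 2 ^ 2 := hP_def.symm.trans hP2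
  have hμH : μ * H = P / 2 - k * μ / s := by
    rw [hH]; field_simp
  have hμHneg : μ * H < 0 := mul_neg_of_pos_of_neg hμ hHneg
  have hμHne : μ * H ≠ 0 := ne_of_lt hμHneg
  set D : ℝ := r 0 * p 0 + r 1 * p 1 + r 2 * p 2 with hD
  set w : EuclideanSpace ℝ (Fin 3) := K - (μ * H) • r with hw_def
  have hw : w = (P / 2) • r - D • p := by
    ext i
    fin_cases i <;> simp [hw_def, hK, hL, cross3, hμH, hD] <;> field_simp
    · linear_combination (-(2 * s * r 0)) * hPn
    · linear_combination (-(2 * s * r 1)) * hPn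
    · linear_combination (-(2 * s * r 2)) * hPn
  have hwnn : 0 ≤ P * s / 2 := by positivity
  have hwnorm : ‖w‖ = P * s / 2 := by
    have h1 : ‖w‖ ^ 2 = (P * s / 2) ^ 2 := by
      rw [hw, EuclideanSpace.norm_eq, Real.sq_sqrt (by positivity)]
      simp only [PiLp.sub_apply, PiLp.smul_apply, smul_eq_mul, Fin.sum_univ_three,
        Real.norm_eq_abs, sq_abs]
      linear_combination (-(P ^ 2 / 4)) * hs2 + (-(D ^ 2)) * hP2 + (P * D) * hD
    calc ‖w‖ = Real.sqrt (‖w‖ ^ 2) := (Real.sqrt_sq (norm_nonneg w)).symm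
      _ = Real.sqrt ((P * s / 2) ^ 2) := by rw [h1]
      _ = P * s / 2 := Real.sqrt_sq hwnn
  have htr : t - r = (μ * H)⁻¹ • w := by
    rw [ht, hw_def, smul_sub, smul_smul, inv_mul_cancel₀ hμHne, one_smul]
  have hnorm : ‖t - r‖ = (P * s / 2) / (-(μ * H)) := by
    rw [htr, norm_smul, hwnorm, norm_inv, Real.norm_eq_abs, abs_of_neg hμHneg]
    ring
  have hμH' : 2 * (μ * H) * s = P * s - 2 * k * μ := by
    rw [hH]; field_simp
  have hHne : H ≠ 0 := ne_of_lt hHneg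
  rw [hnorm]
  field_simp
  linear_combination hμH'
end

section
/- The semiminor axis b of the Kepler ellipse with energy H < 0 and angular momentum L satisfies 4b² = −2|L|²/(μH), where 2a = −k/H is the major axis and 2c = |K|/(−μH) is the focal distance, a² = b² + c². -/
open RealInnerProductSpace

lemma norm_sq3 (x : EuclideanSpace ℝ (Fin 3)) : ‖x‖ ^ 2 = x 0 ^ 2 + x 1 ^ 2 + x 2 ^ 2 := by
  rw [EuclideanSpace.norm_eq, Real.sq_sqrt (by positivity)]
  simp [Fin.sum_univ_three, sq_abs]

/-- The semiminor axis of the Kepler ellipse: b² = −|L|²/(2μH). -/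
theorem semiminor_axis
    (r p : EuclideanSpace ℝ (Fin 3)) (μ k H : ℝ)
    (hr : r ≠ 0) (hμ : 0 < μ) (hk : 0 < k)
    (L : EuclideanSpace ℝ (Fin 3)) (hL : L = cross3 r p) (hLne : L ≠ 0)
    (hH : H = ‖p‖ ^ 2 / (2 * μ) - k / ‖r‖) (hHneg : H < 0)
    (K : EuclideanSpace ℝ (Fin 3))
    (hK : K = cross3 p L - ((k * μ) / ‖r‖) • r)
    (a c b : ℝ) (ha : a = -k / (2 * H)) (hc : c = ‖K‖ / (-(2 * μ * H)))
    (hb : 0 ≤ b) (hb2 : b ^ 2 = a ^ 2 - c ^ 2) :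
    b ^ 2 = -‖L‖ ^ 2 / (2 * μ * H) := by
  have hRne : ‖r‖ ≠ 0 := by simpa using hr
  have hHne : H ≠ 0 := ne_of_lt hHneg
  have hμne : μ ≠ 0 := ne_of_gt hμ
  have hL0 : L 0 = r 1 * p 2 - r 2 * p 1 := by rw [hL]; simp [cross3]
  have hL1 : L 1 = r 2 * p 0 - r 0 * p 2 := by rw [hL]; simp [cross3]
  have hL2 : L 2 = r 0 * p 1 - r 1 * p 0 := by rw [hL]; simp [cross3]
  have hK0 : K 0 = (p 1 * L 2 - p 2 * L 1) - (k * μ / ‖r‖) * r 0 := by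
    rw [hK]; simp [cross3]
  have hK1 : K 1 = (p 2 * L 0 - p 0 * L 2) - (k * μ / ‖r‖) * r 1 := by
    rw [hK]; simp [cross3]
  have hK2 : K 2 = (p 0 * L 1 - p 1 * L 0) - (k * μ / ‖r‖) * r 2 := by
    rw [hK]; simp [cross3]
  have hNR : ‖r‖ ^ 2 = r 0 ^ 2 + r 1 ^ 2 + r 2 ^ 2 := norm_sq3 r
  have e0 : ‖r‖ * K 0 = ‖r‖ * (p 1 * L 2 - p 2 * L 1) - k * μ * r 0 := by
    rw [hK0]; field_simp
  have e1 : ‖r‖ * K 1 = ‖r‖ * (p 2 * L 0 - p 0 * L 2) - k * μ * r 1 := by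
    rw [hK1]; field_simp
  have e2 : ‖r‖ * K 2 = ‖r‖ * (p 0 * L 1 - p 1 * L 0) - k * μ * r 2 := by
    rw [hK2]; field_simp
  have hT : 2 * μ * H * ‖r‖ = ‖p‖ ^ 2 * ‖r‖ - 2 * k * μ := by
    rw [hH]; field_simp
  have hNP : ‖p‖ ^ 2 = p 0 ^ 2 + p 1 ^ 2 + p 2 ^ 2 := norm_sq3 p
  have key2 : (‖r‖ * K 0) ^ 2 + (‖r‖ * K 1) ^ 2 + (‖r‖ * K 2) ^ 2
      = ((k * μ) ^ 2 + 2 * μ * H * ‖L‖ ^ 2) * ‖r‖ ^ 2 := by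
    rw [e0, e1, e2, norm_sq3 L, hL0, hL1, hL2]
    rw [hNP] at hT
    linear_combination (-(k * μ) ^ 2) * hNR
      - (‖r‖ * ((r 1 * p 2 - r 2 * p 1) ^ 2 + (r 2 * p 0 - r 0 * p 2) ^ 2
          + (r 0 * p 1 - r 1 * p 0) ^ 2)) * hT
  have hKey : ‖K‖ ^ 2 = (k * μ) ^ 2 + 2 * μ * H * ‖L‖ ^ 2 := by
    have hR2ne : ‖r‖ ^ 2 ≠ 0 := pow_ne_zero _ hRne
    apply mul_right_cancel₀ hR2ne
    rw [norm_sq3 K]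
    linear_combination key2
  rw [hb2, ha, hc]
  field_simp
  linear_combination (-1 : ℝ) * hKey
end

section
/- For any Kepler ellipse with energy H < 0 passing through a fixed point r, the second focus t = K/(μH) satisfies |t − r| = −k/H − |r| = 2a − |r|. Hence the locus of second foci of all Kepler ellipses with energy H through r is contained in the circle with center r and radius 2a − |r|. -/
open RealInnerProductSpace
/-- For a Kepler ellipse with energy H < 0 through the point r, the second focus
t = K/(μH) satisfies |t − r| = 2a − |r| with a = −k/(2H): the locus of second foci lies
on the circle with center r and radius 2a − |r|. -/
theorem second_focus_on_circle
    (r p : EuclideanSpace ℝ (Fin 3)) (μ k H a : ℝ)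
    (hr : r ≠ 0) (hμ : 0 < μ) (hk : 0 < k)
    (L : EuclideanSpace ℝ (Fin 3)) (hL : L = cross3 r p) (hLne : L ≠ 0)
    (hH : H = ‖p‖ ^ 2 / (2 * μ) - k / ‖r‖) (hHneg : H < 0)
    (K t : EuclideanSpace ℝ (Fin 3))
    (hK : K = cross3 p L - ((k * μ) / ‖r‖) • r)
    (ht : t = (μ * H)⁻¹ • K) (ha : a = -k / (2 * H)) :
    ‖t - r‖ = -k / H - ‖r‖ ∧ ‖t - r‖ = 2 * a - ‖r‖ := by
  have hnr : 0 < ‖r‖ := norm_pos_iff.mpr hr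
  have hnrne : ‖r‖ ≠ 0 := ne_of_gt hnr
  have hHne : H ≠ 0 := ne_of_lt hHneg
  have hμne : μ ≠ 0 := ne_of_gt hμ
  have hμHne : μ * H ≠ 0 := mul_ne_zero hμne hHne
  have hrsq : ‖r‖ ^ 2 = r 0 ^ 2 + r 1 ^ 2 + r 2 ^ 2 := by
    rw [EuclideanSpace.norm_eq, Real.sq_sqrt (by positivity)]
    simp [Fin.sum_univ_three, sq_abs]
  have hpsq : ‖p‖ ^ 2 = p 0 ^ 2 + p 1 ^ 2 + p 2 ^ 2 := by
    rw [EuclideanSpace.norm_eq, Real.sq_sqrt (by positivity)]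
    simp [Fin.sum_univ_three, sq_abs]
  have hμH : μ * H = ‖p‖ ^ 2 / 2 - k * μ / ‖r‖ := by
    rw [hH]; field_simp
  set ipr : ℝ := r 0 * p 0 + r 1 * p 1 + r 2 * p 2 with hipr
  have hKv : ∀ i, K i = (μ * H) * r i + (‖p‖ ^ 2 / 2) * r i - ipr * p i := by
    intro i
    fin_cases i <;>
      · simp [hK, hL, cross3, hipr, hμH, hpsq]
        ring
  have htr : ∀ i, t i - r i = (μ * H)⁻¹ * ((‖p‖ ^ 2 / 2) * r i - ipr * p i) := by
    intro i
    have h1 : t i = (μ * H)⁻¹ * K i := by rw [ht]; rfl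
    rw [h1, hKv i]
    field_simp
    ring
  have hsub : ∀ i, (t - r) i = t i - r i := fun i => rfl
  have hnsq : ‖t - r‖ ^ 2 =
      (μ * H)⁻¹ ^ 2 * ((‖p‖ ^ 2 * ‖r‖ / 2) ^ 2) := by
    have h0 : ‖t - r‖ ^ 2 = (t 0 - r 0) ^ 2 + (t 1 - r 1) ^ 2 + (t 2 - r 2) ^ 2 := by
      rw [EuclideanSpace.norm_eq, Real.sq_sqrt (by positivity)]
      simp [Fin.sum_univ_three, sq_abs, hsub]
    rw [h0, htr 0, htr 1, htr 2]
    have key : ((‖p‖ ^ 2 / 2) * r 0 - ipr * p 0) ^ 2 + ((‖p‖ ^ 2 / 2) * r 1 - ipr * p 1) ^ 2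
        + ((‖p‖ ^ 2 / 2) * r 2 - ipr * p 2) ^ 2 = (‖p‖ ^ 2 * ‖r‖ / 2) ^ 2 := by
      rw [hipr, hpsq]
      linear_combination (-(p 0 ^ 2 + p 1 ^ 2 + p 2 ^ 2) ^ 2 / 4) * hrsq
    linear_combination ((μ * H)⁻¹) ^ 2 * key
  have hd : μ * H * ‖r‖ = ‖p‖ ^ 2 * ‖r‖ / 2 - k * μ := by
    rw [hμH]; field_simp
  have hkH : -k / H * (μ * H) = -(k * μ) := by
    field_simp
  have hfin : (-k / H - ‖r‖) * (μ * H) = -(‖p‖ ^ 2 * ‖r‖ / 2) := by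
    linear_combination hkH - hd
  have hx : -k / H - ‖r‖ = -(‖p‖ ^ 2 * ‖r‖ / 2) * (μ * H)⁻¹ := by
    rw [eq_mul_inv_iff_mul_eq₀ hμHne]; exact hfin
  have h2 : 0 ≤ -k / H - ‖r‖ := by
    rw [hx]
    have hμHneg : μ * H < 0 := mul_neg_of_pos_of_neg hμ hHneg
    have h4 : (μ * H)⁻¹ < 0 := inv_lt_zero.mpr hμHneg
    have h5 : 0 ≤ ‖p‖ ^ 2 * ‖r‖ / 2 := by positivity
    nlinarith
  have hsq : ‖t - r‖ ^ 2 = (-k / H - ‖r‖) ^ 2 := by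
    rw [hnsq, hx]; ring
  have hmain : ‖t - r‖ = -k / H - ‖r‖ := by
    calc ‖t - r‖ = Real.sqrt (‖t - r‖ ^ 2) := (Real.sqrt_sq (norm_nonneg _)).symm
    _ = Real.sqrt ((-k / H - ‖r‖) ^ 2) := by rw [hsq]
    _ = -k / H - ‖r‖ := Real.sqrt_sq h2
  refine ⟨hmain, ?_⟩
  rw [hmain, ha]
  field_simp
end

section
/- If q lies on a Kepler ellipse with foci 0 and t, major axis 2a = −k/H, and the ellipse passes through a fixed point r (so |t − r| = 2a − |r|), then |q| + |q − r| ≤ 4a − |r|. Thus the region swept out by all Kepler ellipses with energy H through r is contained in the ellipse with foci 0 and r and major axis 4a − |r|. -/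
open RealInnerProductSpace
/-- Any point q on a Kepler ellipse with foci 0 and t, major axis 2a, passing through r,
satisfies |q| + |q − r| ≤ 4a − |r|. -/
theorem swept_region_bounded
    (a : ℝ) (r t q : EuclideanSpace ℝ (Fin 3))
    (ha : 0 < a) (hr0 : 0 < ‖r‖) (hr2a : ‖r‖ < 2 * a)
    (htr : ‖t - r‖ = 2 * a - ‖r‖)
    (hq : ‖q‖ + ‖q - t‖ = 2 * a) :
    ‖q‖ + ‖q - r‖ ≤ 4 * a - ‖r‖ := by
  have h : ‖q - r‖ ≤ ‖q - t‖ + ‖t - r‖ := by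
    calc ‖q - r‖ = ‖(q - t) + (t - r)‖ := by rw [sub_add_sub_cancel]
    _ ≤ ‖q - t‖ + ‖t - r‖ := norm_add_le _ _
  linarith
end

section
/- In the setting of the previous item, for each q with |q| + |q − r| = 4a − |r| (and each r, q in the plane), there exists t with |t − r| = 2a − |r| and |q| + |q − t| = 2a; namely t can be taken on the segment from q to r at distance 2a − |r| from r. Hence the bounding ellipse is attained. -/
open RealInnerProductSpace
/-- The bounding ellipse is attained: if |q| + |q − r| = 4a − |r| then there is a focus t
on the segment from r to q with |t − r| = 2a − |r| and |q| + |q − t| = 2a. -/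
theorem bounding_ellipse_attained
    (a : ℝ) (r q : EuclideanSpace ℝ (Fin 3))
    (ha : 0 < a) (hr0 : 0 < ‖r‖) (hr2a : ‖r‖ < 2 * a)
    (hqr : q ≠ r)
    (hq : ‖q‖ + ‖q - r‖ = 4 * a - ‖r‖) :
    ∃ t : EuclideanSpace ℝ (Fin 3), t ∈ segment ℝ r q ∧ ‖t - r‖ = 2 * a - ‖r‖ ∧
      ‖q‖ + ‖q - t‖ = 2 * a := by
  set c := ‖q - r‖ with hc
  have hcpos : 0 < c := by
    simpa [hc] using norm_sub_pos_iff.mpr hqr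
  have htri : ‖q‖ ≤ c + ‖r‖ := by
    calc ‖q‖ = ‖q - r + r‖ := by rw [sub_add_cancel]
      _ ≤ c + ‖r‖ := norm_add_le _ _
  have hge : 2 * a - ‖r‖ ≤ c := by nlinarith
  set s : ℝ := (2 * a - ‖r‖) / c with hs
  have hs0 : 0 ≤ s := div_nonneg (by linarith) hcpos.le
  have hs1 : s ≤ 1 := (div_le_one hcpos).mpr hge
  refine ⟨r + s • (q - r), ?_, ?_, ?_⟩
  · rw [segment_eq_image']
    exact ⟨s, ⟨hs0, hs1⟩, rfl⟩
  · have : r + s • (q - r) - r = s • (q - r) := by abel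
    rw [this, norm_smul, Real.norm_of_nonneg hs0, ← hc, hs,
      div_mul_cancel₀ _ hcpos.ne']
  · have : q - (r + s • (q - r)) = (1 - s) • (q - r) := by
      rw [sub_smul, one_smul]; abel
    rw [this, norm_smul, Real.norm_of_nonneg (by linarith), ← hc]
    have : (1 - s) * c = c - (2 * a - ‖r‖) := by
      rw [hs]; field_simp
    rw [this]; linarith
end

section
/- The distance from the orbit point r to the directrix D = {d + w : w · K = 0}, where d = |L|² K/|K|², equals |r|/e with e = |K|/(kμ). Explicitly, (d − r)·K/|K| = kμ|r|/|K|. -/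
open RealInnerProductSpace
/-- e = |K|/(kμ): explicitly (d − r)·K/|K| = kμ|r|/|K|. -/
theorem distance_to_directrix
    (r p : EuclideanSpace ℝ (Fin 3)) (μ k : ℝ)
    (hr : r ≠ 0) (hμ : 0 < μ) (hk : 0 < k)
    (L : EuclideanSpace ℝ (Fin 3)) (hL : L = cross3 r p) (hLne : L ≠ 0)
    (K d : EuclideanSpace ℝ (Fin 3))
    (hK : K = cross3 p L - ((k * μ) / ‖r‖) • r) (hKne : K ≠ 0)
    (hd : d = (‖L‖ ^ 2 / ‖K‖ ^ 2) • K) :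
    ⟪d - r, K⟫ / ‖K‖ = k * μ * ‖r‖ / ‖K‖ := by
  have hKnorm : ‖K‖ ≠ 0 := norm_ne_zero_iff.mpr hKne
  have hrnorm : ‖r‖ ≠ 0 := norm_ne_zero_iff.mpr hr
  have hdK : ⟪d, K⟫ = ‖L‖ ^ 2 := by
    rw [hd, real_inner_smul_left, real_inner_self_eq_norm_sq]
    field_simp
  have hrcross : ⟪r, cross3 p L⟫ = ‖L‖ ^ 2 := by
    rw [← real_inner_self_eq_norm_sq, hL]
    simp only [inner3, cross3]
    simp only [Matrix.cons_val_zero, Matrix.cons_val_one, Matrix.head_cons,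
      Matrix.cons_val_two, Matrix.tail_cons]
    ring
  have hrK : ⟪r, K⟫ = ‖L‖ ^ 2 - k * μ * ‖r‖ := by
    rw [hK, inner_sub_right, real_inner_smul_right, real_inner_self_eq_norm_sq, hrcross]
    field_simp
  rw [inner_sub_left, hdK, hrK]
  ring
end

section
/- Let u = a r/(a − |r|) with a = −k/(2H) and 0 < |r| < a. The orthogonal reflection v of u in the directrix plane D = d + K^⊥ (d = |L|² K/|K|²), given by v = u − 2((u − d)·K) K/|K|², equals a r/(a − |r|) − |r| t/(a − |r|), where t = K/(μH). -/
open RealInnerProductSpace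
/-- The orthogonal reflection of u = a r/(a−|r|) in the directrix plane d + K^⊥ equals
a r/(a−|r|) − |r| t/(a−|r|), where t = K/(μH). -/
theorem reflection_of_u_in_directrix
    (r p : EuclideanSpace ℝ (Fin 3)) (μ k H a : ℝ)
    (hr : r ≠ 0) (hμ : 0 < μ) (hk : 0 < k)
    (L : EuclideanSpace ℝ (Fin 3)) (hL : L = cross3 r p) (hLne : L ≠ 0)
    (hH : H = ‖p‖ ^ 2 / (2 * μ) - k / ‖r‖) (hHneg : H < 0)
    (K d t u v : EuclideanSpace ℝ (Fin 3))
    (hK : K = cross3 p L - ((k * μ) / ‖r‖) • r) (hKne : K ≠ 0)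
    (ha : a = -k / (2 * H)) (hra : ‖r‖ < a)
    (hd : d = (‖L‖ ^ 2 / ‖K‖ ^ 2) • K)
    (ht : t = (μ * H)⁻¹ • K)
    (hu : u = (a / (a - ‖r‖)) • r)
    (hv : v = u - ((2 * ⟪u - d, K⟫) / ‖K‖ ^ 2) • K) :
    v = (a / (a - ‖r‖)) • r - (‖r‖ / (a - ‖r‖)) • t := by
  have hr0 : (0:ℝ) < ‖r‖ := norm_pos_iff.mpr hr
  have hK0 : (0:ℝ) < ‖K‖ ^ 2 := by
    have := norm_pos_iff.mpr hKne
    positivity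
  have haR : (0:ℝ) < a - ‖r‖ := sub_pos.mpr hra
  have h1 : ⟪r, cross3 p L⟫ = ‖L‖ ^ 2 := by
    rw [hL, ← real_inner_self_eq_norm_sq]
    simp [cross3, PiLp.inner_apply, Fin.sum_univ_three, -inner_self_eq_norm_sq_to_K]
    ring
  have h2 : ⟪cross3 p L, cross3 p L⟫ = ‖p‖ ^ 2 * ‖L‖ ^ 2 := by
    rw [hL, ← real_inner_self_eq_norm_sq, ← real_inner_self_eq_norm_sq]
    simp [cross3, PiLp.inner_apply, Fin.sum_univ_three, -inner_self_eq_norm_sq_to_K]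
    ring
  have hirK : ⟪r, K⟫ = ‖L‖ ^ 2 - k * μ * ‖r‖ := by
    rw [hK, inner_sub_right, real_inner_smul_right, real_inner_self_eq_norm_sq, h1]
    field_simp
  have hK2 : ‖K‖ ^ 2 = 2 * μ * H * ‖L‖ ^ 2 + k ^ 2 * μ ^ 2 := by
    rw [← real_inner_self_eq_norm_sq, hK]
    rw [inner_sub_left, inner_sub_right, inner_sub_right, real_inner_smul_left,
      real_inner_smul_left, real_inner_smul_right, real_inner_smul_right]
    have h2' : ‖cross3 p L‖ ^ 2 = ‖p‖ ^ 2 * ‖L‖ ^ 2 := by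
      rw [← real_inner_self_eq_norm_sq]; exact h2
    have h1' : ⟪cross3 p L, r⟫ = ‖L‖ ^ 2 := by rw [real_inner_comm]; exact h1
    rw [real_inner_self_eq_norm_sq, real_inner_self_eq_norm_sq, h2', h1, h1', hH]
    field_simp
    ring
  have hc : (2 * ⟪u - d, K⟫) / ‖K‖ ^ 2 = ‖r‖ / ((a - ‖r‖) * (μ * H)) := by
    rw [hu, hd, inner_sub_left, real_inner_smul_left, real_inner_smul_left,
      real_inner_self_eq_norm_sq, hirK]
    have hkk : k = -(2 * H * a) := by rw [ha]; field_simp [hHneg.ne]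
    have hμH : (a - ‖r‖) * (μ * H) ≠ 0 :=
      mul_ne_zero haR.ne' (mul_neg_of_pos_of_neg hμ hHneg).ne
    rw [div_mul_cancel₀ _ hK0.ne', div_eq_div_iff hK0.ne' hμH, hK2, hkk]
    field_simp [haR.ne']
    ring
  rw [hv, hc, ht, smul_smul]
  congr 2
  field_simp
end
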